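/- Let Ω be a finite set, F_q a finite field, C a linear subspace of F_q^Ω, and r a prime different from the characteristic of F_q. Then every Sylow r-subgroup of PAut(C) is 2-closed. -/

import Mathlib

def permAct {Ω F : Type*} (g : Equiv.Perm Ω) (f : Ω → F) : Ω → F :=
  fun ω => f (g.symm ω)

/-- The permutation automorphism group of a linear code `C ≤ F^Ω`:
all `g ∈ Sym(Ω)` with `C^g = C`. -/
def PAut {Ω F : Type*} [Field F] (C : Submodule F (Ω → F)) : Subgroup (Equiv.Perm Ω) where
  carrier := {g | permAct g '' (C : Set (Ω → F)) = C}
  one_mem' := by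
    show permAct (1 : Equiv.Perm Ω) '' (C : Set (Ω → F)) = C
    have : (permAct (1 : Equiv.Perm Ω) : (Ω → F) → Ω → F) = id := rfl
    rw [this, Set.image_id]
  mul_mem' := by
    intro a b ha hb
    show permAct (a * b) '' (C : Set (Ω → F)) = C
    have h : (permAct (a * b) : (Ω → F) → Ω → F) = permAct a ∘ permAct b := rfl
    rw [h, Set.image_comp, hb, ha]
  inv_mem' := by
    intro a ha
    show permAct a⁻¹ '' (C : Set (Ω → F)) = C
    conv_lhs => rw [← ha]
    rw [← Set.image_comp]
    have h : (permAct a⁻¹ ∘ permAct a : (Ω → F) → Ω → F) = id := by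
      funext f ω
      simp [permAct, Equiv.Perm.inv_def]
    rw [h, Set.image_id]

/-- The 2-closure of a permutation group `G ≤ Sym(Ω)`: all permutations mapping each
`G`-orbit on `Ω × Ω` onto itself. -/
def twoClosure {Ω : Type*} (G : Subgroup (Equiv.Perm Ω)) : Subgroup (Equiv.Perm Ω) where
  carrier := {g | ∀ α β : Ω, ∃ h ∈ G, g α = h α ∧ g β = h β}
  one_mem' := fun α β => ⟨1, G.one_mem, rfl, rfl⟩
  mul_mem' := by
    intro a b ha hb α β
    obtain ⟨h, hh, h1, h2⟩ := hb α β
    obtain ⟨k, hk, k1, k2⟩ := ha (h α) (h β)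
    exact ⟨k * h, G.mul_mem hk hh, by simp [Equiv.Perm.mul_apply, h1, k1],
      by simp [Equiv.Perm.mul_apply, h2, k2]⟩
  inv_mem' := by
    intro a ha α β
    obtain ⟨h, hh, h1, h2⟩ := ha (a⁻¹ α) (a⁻¹ β)
    refine ⟨h⁻¹, G.inv_mem hh, ?_, ?_⟩
    · have := congrArg (fun z => h⁻¹ z) h1
      simpa using this.symm
    · have := congrArg (fun z => h⁻¹ z) h2
      simpa using this.symm
open Equiv

section Basic

variable {Ω F : Type*}

lemma mem_twoClosure_iff {G : Subgroup (Perm Ω)} {g : Perm Ω} :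
    g ∈ twoClosure G ↔ ∀ α β : Ω, ∃ h ∈ G, g α = h α ∧ g β = h β := Iff.rfl

lemma le_twoClosure (G : Subgroup (Perm Ω)) : G ≤ twoClosure G :=
  fun h hh _ _ => ⟨h, hh, rfl, rfl⟩

lemma permAct_mul (a b : Perm Ω) (f : Ω → F) :
    permAct (a * b) f = permAct a (permAct b f) := rfl

lemma permAct_one (f : Ω → F) : permAct (1 : Perm Ω) f = f := rfl

lemma permAct_apply (g : Perm Ω) (f : Ω → F) (ω : Ω) : permAct g f ω = f (g⁻¹ ω) := rfl

lemma permAct_inv_cancel (g : Perm Ω) (f : Ω → F) : permAct g (permAct g⁻¹ f) = f := by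
  rw [← permAct_mul, mul_inv_cancel, permAct_one]

lemma permAct_inv_cancel' (g : Perm Ω) (f : Ω → F) : permAct g⁻¹ (permAct g f) = f := by
  rw [← permAct_mul, inv_mul_cancel, permAct_one]

lemma mem_PAut_iff [Field F] {C : Submodule F (Ω → F)} {g : Perm Ω} :
    g ∈ PAut C ↔ permAct g '' (C : Set (Ω → F)) = C := Iff.rfl

lemma permAct_mem_of_mem_PAut [Field F] {C : Submodule F (Ω → F)} {g : Perm Ω}
    (hg : g ∈ PAut C) {f : Ω → F} (hf : f ∈ C) : permAct g f ∈ C := by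
  have : permAct g f ∈ permAct g '' (C : Set (Ω → F)) := Set.mem_image_of_mem _ hf
  rwa [mem_PAut_iff.mp hg, SetLike.mem_coe] at this

/-- `permAct` as a linear map. -/
def permActL (F : Type*) [Field F] {Ω : Type*} (g : Perm Ω) : (Ω → F) →ₗ[F] (Ω → F) where
  toFun := permAct g
  map_add' := fun _ _ => rfl
  map_smul' := fun _ _ => rfl

@[simp] lemma permActL_apply [Field F] (g : Perm Ω) (f : Ω → F) :
    permActL F g f = permAct g f := rfl

lemma permAct_single [Field F] [DecidableEq Ω] (g : Perm Ω) (β : Ω) :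
    permAct g (Pi.single β (1 : F)) = Pi.single (g β) 1 := by
  funext ω
  simp only [permAct_apply, Pi.single_apply]
  congr 1
  simp only [eq_iff_iff]
  constructor
  · rintro rfl; simp
  · rintro rfl; simp

end Basic

section Averaging

variable {Ω F : Type*} [Fintype Ω] [DecidableEq Ω] [Field F]

lemma twoClosure_mem_PAut (C : Submodule F (Ω → F)) (H : Subgroup (Perm Ω))
    (hH : H ≤ PAut C) [Fintype H] (hcard : (Fintype.card H : F) ≠ 0)
    {g : Perm Ω} (hg : g ∈ twoClosure H) : g ∈ PAut C := by
  obtain ⟨D, hD⟩ := Submodule.exists_isCompl C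
  set π₀ : (Ω → F) →ₗ[F] (Ω → F) := C.subtype.comp (C.linearProjOfIsCompl D hD) with hπ₀
  have hπ₀mem : ∀ x, π₀ x ∈ C := fun x => (C.linearProjOfIsCompl D hD x).2
  have hπ₀id : ∀ x ∈ C, π₀ x = x := by
    intro x hx
    show ((C.projectionOnto D hD) x : Ω → F) = x
    have : x = ((⟨x, hx⟩ : C) : Ω → F) := rfl
    rw [this, Submodule.projectionOnto_apply_left hD]
  set S : (Ω → F) →ₗ[F] (Ω → F) :=
    ∑ h : H, (permActL F (h : Perm Ω)) ∘ₗ π₀ ∘ₗ (permActL F ((h : Perm Ω))⁻¹) with hS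
  set c : F := (Fintype.card H : F) with hc
  set π : (Ω → F) →ₗ[F] (Ω → F) := c⁻¹ • S with hπ
  have hπ_apply : ∀ x, π x = c⁻¹ • S x := fun x => rfl
  have hS_apply : ∀ x, S x =
      ∑ h : H, permAct (h : Perm Ω) (π₀ (permAct ((h : Perm Ω))⁻¹ x)) := by
    intro x; rw [hS, LinearMap.sum_apply]; rfl
  have hπmem : ∀ x, π x ∈ C := by
    intro x
    have hSx : S x ∈ C := by
      rw [hS_apply]
      exact Submodule.sum_mem C fun h _ => permAct_mem_of_mem_PAut (hH h.2) (hπ₀mem _)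
    rw [hπ_apply]
    exact Submodule.smul_mem C c⁻¹ hSx
  have hπid : ∀ x ∈ C, π x = x := by
    intro x hx
    have hSx : S x = (Fintype.card H : F) • x := by
      rw [hS_apply, Finset.sum_congr rfl (fun (h : H) _ => ?_), Finset.sum_const,
        Finset.card_univ, ← Nat.cast_smul_eq_nsmul F]
      rw [hπ₀id _ (permAct_mem_of_mem_PAut (hH (H.inv_mem h.2)) hx), permAct_inv_cancel]
    rw [hπ_apply, hSx, ← hc, smul_smul, inv_mul_cancel₀ hcard, one_smul]
  -- equivariance under H
  have hScomm : ∀ h₀ : H, ∀ x, permAct (h₀ : Perm Ω) (S x) = S (permAct (h₀ : Perm Ω) x) := by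
    intro h₀ x
    have hL : permAct (h₀ : Perm Ω) (S x) =
        ∑ h : H, permAct ((h₀ : Perm Ω) * (h : Perm Ω)) (π₀ (permAct ((h : Perm Ω))⁻¹ x)) := by
      rw [hS_apply]
      show permActL F (h₀ : Perm Ω) (∑ h : H, permAct (h : Perm Ω) (π₀ (permAct ((h : Perm Ω))⁻¹ x)))
        = _
      rw [map_sum]
      exact Finset.sum_congr rfl fun h _ => (permAct_mul _ _ _).symm
    have hR : S (permAct (h₀ : Perm Ω) x) =
        ∑ h : H, permAct ((h₀ : Perm Ω) * (h : Perm Ω)) (π₀ (permAct ((h : Perm Ω))⁻¹ x)) := by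
      rw [hS_apply]
      refine (Fintype.sum_equiv (Equiv.mulLeft h₀)
        (fun h => permAct ((h₀ : Perm Ω) * (h : Perm Ω)) (π₀ (permAct ((h : Perm Ω))⁻¹ x)))
        (fun h => permAct (h : Perm Ω) (π₀ (permAct ((h : Perm Ω))⁻¹ (permAct (h₀ : Perm Ω) x))))
        (fun h => ?_)).symm
      show permAct ((h₀ : Perm Ω) * (h : Perm Ω)) (π₀ (permAct ((h : Perm Ω))⁻¹ x)) =
        permAct ((h₀ * h : H) : Perm Ω) (π₀ (permAct (((h₀ * h : H) : Perm Ω))⁻¹ (permAct (h₀ : Perm Ω) x)))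
      have e1 : ((h₀ * h : H) : Perm Ω) = (h₀ : Perm Ω) * (h : Perm Ω) := rfl
      rw [e1, mul_inv_rev, permAct_mul (h : Perm Ω)⁻¹, permAct_inv_cancel']
    rw [hL, hR]
  have hπcomm : ∀ h₀ : H, ∀ x, permAct (h₀ : Perm Ω) (π x) = π (permAct (h₀ : Perm Ω) x) := by
    intro h₀ x
    rw [hπ_apply, hπ_apply, ← hScomm h₀ x]
    show permActL F (h₀ : Perm Ω) (c⁻¹ • S x) = c⁻¹ • permActL F (h₀ : Perm Ω) (S x)
    rw [map_smul]
  -- the "matrix" of π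
  set M : Ω → Ω → F := fun α β => π (Pi.single β 1) α with hM
  have hMH : ∀ (h : H) (α β : Ω), M ((h : Perm Ω) α) ((h : Perm Ω) β) = M α β := by
    intro h α β
    show π (Pi.single ((h : Perm Ω) β) 1) ((h : Perm Ω) α) = π (Pi.single β 1) α
    rw [← permAct_single (h : Perm Ω) β, ← hπcomm h, permAct_apply, Perm.coe_inv, Equiv.symm_apply_apply]
  have hMg : ∀ α β : Ω, M (g α) (g β) = M α β := by
    intro α β
    obtain ⟨h, hh, e1, e2⟩ := hg α β
    rw [e1, e2]
    exact hMH ⟨h, hh⟩ α β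
  -- commutation with g
  have hbasis : ∀ β : Ω, π (permAct g (Pi.single β 1)) = permAct g (π (Pi.single β 1)) := by
    intro β
    funext ω
    rw [permAct_single]
    show M ω (g β) = permAct g (π (Pi.single β 1)) ω
    rw [permAct_apply]
    show M ω (g β) = M (g⁻¹ ω) β
    have := hMg (g⁻¹ ω) β
    rwa [Perm.coe_inv, Equiv.apply_symm_apply] at this
  have hgcommL : π ∘ₗ permActL F g = permActL F g ∘ₗ π := by
    refine Module.Basis.ext (Pi.basisFun F Ω) fun β => ?_
    rw [Pi.basisFun_apply]
    simp only [LinearMap.comp_apply, permActL_apply]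
    exact hbasis β
  have hgcomm : ∀ x, π (permAct g x) = permAct g (π x) := by
    intro x
    have := LinearMap.congr_fun hgcommL x
    simpa using this
  have hginv_comm : ∀ x, π (permAct g⁻¹ x) = permAct g⁻¹ (π x) := by
    intro x
    have h1 := hgcomm (permAct g⁻¹ x)
    rw [permAct_inv_cancel] at h1
    rw [h1, permAct_inv_cancel']
  rw [mem_PAut_iff]
  apply Set.Subset.antisymm
  · rintro _ ⟨f, hf, rfl⟩
    have hf' : f ∈ C := hf
    have : permAct g f ∈ C := by
      rw [← hπid f hf', ← hgcomm f]
      exact hπmem _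
    exact this
  · intro f hf
    have hf' : f ∈ C := hf
    have hmem : permAct g⁻¹ f ∈ C := by
      rw [← hπid f hf', ← hginv_comm f]
      exact hπmem _
    exact ⟨permAct g⁻¹ f, hmem, permAct_inv_cancel g f⟩

end Averaging
section Wielandt

open Equiv

variable {Ω : Type*}

/-- The setoid of orbits of powers of a permutation `z`. -/
def zSetoid (z : Perm Ω) : Setoid Ω where
  r a b := ∃ m : ℤ, (z ^ m) a = b
  iseqv := by
    constructor
    · exact fun a => ⟨0, rfl⟩
    · rintro a b ⟨m, rfl⟩
      refine ⟨-m, ?_⟩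
      rw [← Perm.mul_apply, ← zpow_add, neg_add_cancel, zpow_zero, Perm.one_apply]
    · rintro a b c ⟨m, rfl⟩ ⟨m', rfl⟩
      refine ⟨m' + m, ?_⟩
      rw [← Perm.mul_apply, ← zpow_add]

/-- Permutations commuting with all powers of `z` pointwise. -/
def keyGrp (z : Perm Ω) : Subgroup (Perm Ω) where
  carrier := {g | ∀ (m : ℤ) (a : Ω), g ((z ^ m) a) = (z ^ m) (g a)}
  one_mem' := fun _ _ => rfl
  mul_mem' := by
    intro g g' hg hg' m a
    simp only [Perm.mul_apply]
    rw [hg' m a, hg m]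
  inv_mem' := by
    intro g hg m a
    have h1 := hg m (g⁻¹ a)
    rw [Perm.coe_inv, Equiv.apply_symm_apply] at h1
    rw [← h1, Perm.coe_inv, Equiv.symm_apply_apply]

lemma mem_keyGrp_iff {z g : Perm Ω} :
    g ∈ keyGrp z ↔ ∀ (m : ℤ) (a : Ω), g ((z ^ m) a) = (z ^ m) (g a) := Iff.rfl

/-- The induced permutation on the quotient by the `z`-orbit setoid. -/
def qmap (z : Perm Ω) (g : keyGrp z) : Quotient (zSetoid z) → Quotient (zSetoid z) :=
  Quotient.map' (g : Perm Ω) (by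
    rintro a b ⟨m, rfl⟩
    exact ⟨m, (g.2 m a).symm⟩)

lemma qmap_mk (z : Perm Ω) (g : keyGrp z) (a : Ω) :
    qmap z g (Quotient.mk (zSetoid z) a) = Quotient.mk (zSetoid z) ((g : Perm Ω) a) := rfl

lemma qmap_mul (z : Perm Ω) (g g' : keyGrp z) (q : Quotient (zSetoid z)) :
    qmap z (g * g') q = qmap z g (qmap z g' q) := by
  induction q using Quotient.ind
  rfl

lemma qmap_one (z : Perm Ω) (q : Quotient (zSetoid z)) : qmap z 1 q = q := by
  induction q using Quotient.ind
  rfl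

/-- The quotient map as a group hom to permutations of the quotient. -/
def permQuotHom (z : Perm Ω) : keyGrp z →* Perm (Quotient (zSetoid z)) :=
  MonoidHom.mk' (fun g =>
    { toFun := qmap z g
      invFun := qmap z g⁻¹
      left_inv := fun q => by rw [← qmap_mul, inv_mul_cancel, qmap_one]
      right_inv := fun q => by rw [← qmap_mul, mul_inv_cancel, qmap_one] })
    (fun g g' => Equiv.ext fun q => qmap_mul z g g' q)

lemma permQuotHom_mk (z : Perm Ω) (g : keyGrp z) (a : Ω) :
    permQuotHom z g (Quotient.mk (zSetoid z) a) = Quotient.mk (zSetoid z) ((g : Perm Ω) a) := rfl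

lemma pow_p_eq_one_of_orbits {p : ℕ} (z : Perm Ω) (hzp : z ^ p = 1) (g : Perm Ω)
    (hgK : g ∈ keyGrp z) (h : ∀ a, ∃ m : ℤ, g a = (z ^ m) a) : g ^ p = 1 := by
  ext a
  obtain ⟨m, hm⟩ := h a
  have key : ∀ i : ℕ, (g ^ i) a = ((z ^ m) ^ i) a := by
    intro i
    induction i with
    | zero => simp
    | succ i ih =>
      rw [pow_succ, pow_succ', Perm.mul_apply, Perm.mul_apply, hm,
        (mem_keyGrp_iff.mp (pow_mem hgK i)) m a, ih]
  have hz1 : (z ^ m) ^ p = 1 := by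
    rw [← zpow_natCast (z ^ m) p, ← zpow_mul, mul_comm, zpow_mul, zpow_natCast, hzp, one_zpow]
  have := key p
  rw [hz1] at this
  simpa using this

theorem wielandt_twoClosure {p : ℕ} (hp : p.Prime) :
    ∀ (n : ℕ) (Ω : Type*) (_ : Fintype Ω), Fintype.card Ω ≤ n →
      ∀ (P : Subgroup (Perm Ω)), (∀ h ∈ P, ∃ k, h ^ p ^ k = 1) →
        ∀ g ∈ twoClosure P, ∃ k, g ^ p ^ k = 1 := by
  intro n
  induction n with
  | zero =>
    intro Ω instΩ hcard P hP g hg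
    have : IsEmpty Ω := by
      rw [← Fintype.card_eq_zero_iff]
      omega
    exact ⟨0, by ext a; exact (this.false a).elim⟩
  | succ n IH =>
    intro Ω instΩ hcard P hP g hg
    classical
    by_cases htriv : ∀ h ∈ P, h = 1
    · refine ⟨0, ?_⟩
      simp only [pow_zero, pow_one]
      ext a
      obtain ⟨h, hh, h1, _⟩ := hg a a
      rw [h1, htriv h hh, Perm.one_apply]
    · push_neg at htriv
      obtain ⟨h₀, hh₀, hne₀⟩ := htriv
      -- P is a nontrivial p-group; find a central element z of order p
      haveI : Nontrivial ↥P := ⟨⟨⟨h₀, hh₀⟩, 1, by simp [Subtype.ext_iff, hne₀]⟩⟩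
      have hPp : IsPGroup p ↥P := by
        intro x
        obtain ⟨k, hk⟩ := hP (x : Perm Ω) x.2
        exact ⟨k, by ext : 1; simpa using hk⟩
      haveI : Fact p.Prime := ⟨hp⟩
      haveI := hPp.center_nontrivial
      obtain ⟨ζc, hζc⟩ := exists_ne (1 : Subgroup.center ↥P)
      set ζ : Perm Ω := ((ζc : ↥P) : Perm Ω) with hζ
      have hζP : ζ ∈ P := (ζc : ↥P).2
      have hζcomm : ∀ h ∈ P, ζ * h = h * ζ := by
        intro h hh
        have := (Subgroup.mem_center_iff.mp ζc.2) ⟨h, hh⟩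
        have := congrArg (fun (x : ↥P) => (x : Perm Ω)) this
        simpa using this.symm
      have hζne : ζ ≠ 1 := by
        intro h
        exact hζc (Subtype.ext (Subtype.ext h))
      obtain ⟨k₀, hk₀⟩ := hP ζ hζP
      obtain ⟨j, hjk, hord⟩ := (Nat.dvd_prime_pow hp).mp (orderOf_dvd_of_pow_eq_one hk₀)
      have hj1 : j ≠ 0 := by
        rintro rfl
        rw [pow_zero] at hord
        exact hζne (orderOf_eq_one_iff.mp hord)
      set z : Perm Ω := ζ ^ (p ^ (j - 1)) with hz
      have hzp : z ^ p = 1 := by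
        rw [hz, ← pow_mul, ← pow_succ, Nat.sub_add_cancel (Nat.one_le_iff_ne_zero.mpr hj1),
          ← hord, pow_orderOf_eq_one]
      have hzne : z ≠ 1 := by
        intro hz1
        have hdvd : orderOf ζ ∣ p ^ (j - 1) := orderOf_dvd_of_pow_eq_one hz1
        rw [hord] at hdvd
        have := (Nat.pow_dvd_pow_iff_le_right hp.one_lt).mp hdvd
        omega
      have hzcomm : ∀ h ∈ P, Commute z h := fun h hh =>
        Commute.pow_left (hζcomm h hh) _
      have hPkey : P ≤ keyGrp z := by
        intro h hh
        intro m a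
        have hc : z ^ m * h = h * z ^ m := Commute.zpow_left (hzcomm h hh) m
        rw [← Perm.mul_apply, ← Perm.mul_apply, hc]
      have hClosKey : twoClosure P ≤ keyGrp z := by
        intro w hw
        intro m a
        obtain ⟨h, hh, e1, e2⟩ := hw a ((z ^ m) a)
        rw [e2, hPkey hh m a, ← e1]
      -- the quotient
      set Qt := Quotient (zSetoid z) with hQt
      haveI : Fintype Qt := Fintype.ofFinite _
      have hcardlt : Fintype.card Qt < Fintype.card Ω := by
        have hne : ∃ a : Ω, z a ≠ a := by
          by_contra hcon
          push_neg at hcon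
          exact hzne (Equiv.ext fun a => hcon a)
        obtain ⟨a, ha⟩ := hne
        refine Fintype.card_lt_of_surjective_not_injective (Quotient.mk (zSetoid z))
          (fun q => q.exists_rep) ?_
        intro hinj
        apply ha
        have : Quotient.mk (zSetoid z) a = Quotient.mk (zSetoid z) (z a) :=
          Quotient.sound ⟨1, by rw [zpow_one]⟩
        exact (hinj this).symm
      set Pq : Subgroup (Perm Qt) := Subgroup.map (permQuotHom z) (P.subgroupOf (keyGrp z)) with hPq
      have hPqp : ∀ σ ∈ Pq, ∃ k, σ ^ p ^ k = 1 := by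
        rintro σ ⟨⟨h, hhK⟩, hhP, rfl⟩
        have hhP' : h ∈ P := hhP
        obtain ⟨k, hk⟩ := hP h hhP' 
        refine ⟨k, ?_⟩
        rw [← map_pow]
        have : (⟨h, hhK⟩ : keyGrp z) ^ p ^ k = 1 := by
          ext : 1
          simpa using hk
        rw [this, map_one]
      set gq := (permQuotHom z) ⟨g, hClosKey hg⟩ with hgq
      have hgqmem : gq ∈ twoClosure Pq := by
        intro qa qb
        obtain ⟨a, rfl⟩ := qa.exists_rep
        obtain ⟨b, rfl⟩ := qb.exists_rep
        obtain ⟨h, hh, e1, e2⟩ := hg a b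
        refine ⟨(permQuotHom z) ⟨h, hPkey hh⟩, ⟨⟨h, hPkey hh⟩, Subgroup.mem_subgroupOf.mpr hh, rfl⟩, ?_, ?_⟩
        · show Quotient.mk (zSetoid z) (g a) = Quotient.mk (zSetoid z) (h a)
          rw [e1]
        · show Quotient.mk (zSetoid z) (g b) = Quotient.mk (zSetoid z) (h b)
          rw [e2]
      obtain ⟨k, hk⟩ := IH Qt _ (by omega) Pq hPqp gq hgqmem
      have horb : ∀ a : Ω, ∃ m : ℤ, (g ^ p ^ k) a = (z ^ m) a := by
        intro a
        have h1 : (⟨g, hClosKey hg⟩ : keyGrp z) ^ p ^ k =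
            ⟨g ^ p ^ k, pow_mem (hClosKey hg) _⟩ := by
          ext : 1
          simp
        have h2 : (permQuotHom z) ⟨g ^ p ^ k, pow_mem (hClosKey hg) _⟩ = 1 := by
          rw [← h1, map_pow]
          exact hk
        have h3 : (permQuotHom z) ⟨g ^ p ^ k, pow_mem (hClosKey hg) _⟩
            (Quotient.mk (zSetoid z) a) = Quotient.mk (zSetoid z) a := by
          rw [h2]; rfl
        rw [permQuotHom_mk] at h3
        have h4 : (zSetoid z).r ((g ^ p ^ k) a) a := Quotient.exact h3
        obtain ⟨m, hm⟩ := h4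
        refine ⟨-m, ?_⟩
        have h5 : (z ^ (-m)) ((z ^ m) ((g ^ p ^ k) a)) = (z ^ (-m)) a :=
          congrArg (z ^ (-m) : Perm Ω) hm
        rw [← Perm.mul_apply, ← zpow_add, neg_add_cancel, zpow_zero, Perm.one_apply] at h5
        exact h5
      have hfinal : (g ^ p ^ k) ^ p = 1 :=
        pow_p_eq_one_of_orbits z hzp _ (pow_mem (hClosKey hg) _) horb
      exact ⟨k + 1, by rw [pow_succ, pow_mul, hfinal]⟩

end Wielandt
open Equiv in
/-- Let `C ≤ F^Ω` be a linear code and `r` a prime different from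
the characteristic of the finite field `F`.  Then every Sylow `r`-subgroup of
`PAut(C)` is 2-closed. -/
theorem sylow_of_paut_is_two_closed
    {Ω F : Type*} [Fintype Ω] [DecidableEq Ω] [Field F] [Fintype F]
    (C : Submodule F (Ω → F))
    (r : ℕ) (hr : r.Prime) (hrchar : r ≠ ringChar F)
    (P : Sylow r (PAut C)) :
    twoClosure (Subgroup.map (PAut C).subtype (P : Subgroup (PAut C))) =
      Subgroup.map (PAut C).subtype (P : Subgroup (PAut C)) := by
  classical
  haveI : Fact r.Prime := ⟨hr⟩
  set H : Subgroup (Perm Ω) := Subgroup.map (PAut C).subtype (P : Subgroup (PAut C)) with hH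
  have hHp : ∀ h ∈ H, ∃ k, h ^ r ^ k = 1 := by
    rintro h ⟨x, hx, rfl⟩
    obtain ⟨k, hk⟩ := P.isPGroup' ⟨x, hx⟩
    refine ⟨k, ?_⟩
    rw [← map_pow]
    have hk' : x ^ r ^ k = 1 := by
      have := congrArg (fun (y : ↥(P : Subgroup (PAut C))) => (y : ↥(PAut C))) hk
      simpa using this
    rw [hk', map_one]
  have hHle : H ≤ PAut C := by
    rintro h ⟨x, hx, rfl⟩
    exact x.2
  haveI : Fintype ↥H := Fintype.ofFinite _
  -- the cardinality of H is a power of r, invertible in F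
  have hHpg : IsPGroup r ↥H := by
    intro x
    obtain ⟨k, hk⟩ := hHp (x : Perm Ω) x.2
    exact ⟨k, by ext : 1; simpa using hk⟩
  obtain ⟨m, hm⟩ := (IsPGroup.iff_card).mp hHpg
  have hrne : (r : F) ≠ 0 := by
    intro h0
    haveI : CharP F (ringChar F) := ringChar.charP F
    have hdvd : ringChar F ∣ r := (CharP.cast_eq_zero_iff F (ringChar F) r).mp h0
    have hcp : (ringChar F).Prime := CharP.char_is_prime F (ringChar F)
    exact hrchar ((Nat.prime_dvd_prime_iff_eq hcp hr).mp hdvd).symm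
  have hcard : (Fintype.card ↥H : F) ≠ 0 := by
    rw [← Nat.card_eq_fintype_card, hm]
    push_cast
    exact pow_ne_zero _ hrne
  -- two-closure is contained in PAut C and is an r-group
  have hClosLe : twoClosure H ≤ PAut C := fun g hg => twoClosure_mem_PAut C H hHle hcard hg
  have hClosP : ∀ g ∈ twoClosure H, ∃ k, g ^ r ^ k = 1 := fun g hg =>
    wielandt_twoClosure hr (Fintype.card Ω) Ω _ le_rfl H hHp g hg
  -- Sylow maximality
  set K' : Subgroup ↥(PAut C) := (twoClosure H).comap (PAut C).subtype with hK'
  have hPK' : (P : Subgroup ↥(PAut C)) ≤ K' := by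
    intro x hx
    show (PAut C).subtype x ∈ twoClosure H
    exact le_twoClosure H ⟨x, hx, rfl⟩
  have hK'p : IsPGroup r ↥K' := by
    intro x
    obtain ⟨k, hk⟩ := hClosP ((x : ↥(PAut C)) : Perm Ω) x.2
    refine ⟨k, ?_⟩
    ext : 2
    simpa using hk
  have hKP : K' = (P : Subgroup ↥(PAut C)) := P.3 hK'p hPK'
  have hmapeq : Subgroup.map (PAut C).subtype K' = H := by rw [hKP]
  rw [hK', Subgroup.map_comap_eq, Subgroup.range_subtype] at hmapeq
  rw [inf_eq_right.mpr hClosLe] at hmapeq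
  exact hmapeq
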